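/- Let s be a finite shift-bounded binary word, and let α be a prefix and γ a suffix of s with 0 < |α| = |γ| < |s|. Then α* ≥ γ > α and α* > γ̃ ≥ α, where α* is the bitwise complement of α and γ̃ is γ with its last symbol inverted. -/
import Mathlib


open Filter MeasureTheory

/-- Left shift by `k` on infinite binary sequences. -/
def shiftSeq (k : ℕ) (x : ℕ → Bool) : ℕ → Bool := fun n => x (n + k)

/-- Strict lexicographic order on infinite binary sequences (`false < true`). -/
def seqLt (a b : ℕ → Bool) : Prop :=
  ∃ n, (∀ k < n, a k = b k) ∧ a n = false ∧ b n = true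

def seqLe (a b : ℕ → Bool) : Prop := a = b ∨ seqLt a b

/-- A finite word viewed as an infinite sequence (padded with zeros). -/
def wordSeq (w : List Bool) : ℕ → Bool := fun n => w.getD n false

/-- Bitwise complement of an infinite sequence. -/
def complSeq (a : ℕ → Bool) : ℕ → Bool := fun n => ! a n

/-- `F(c) = {x : c' ≥ σⁿ(x) ≥ c for all n ≥ 0}` for an infinite bound `c`. -/
def Fset (c : ℕ → Bool) : Set (ℕ → Bool) :=
  {x | ∀ n : ℕ, seqLe c (shiftSeq n x) ∧ seqLe (shiftSeq n x) (complSeq c)}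

/-- The real number in `[0,1]` with binary expansion `x`. -/
noncomputable def seqVal (x : ℕ → Bool) : ℝ :=
  ∑' n : ℕ, (cond (x n) (1 : ℝ) 0) / 2 ^ (n + 1)

/-- The periodic infinite sequence `w^∞`. -/
def perSeq (w : List Bool) : ℕ → Bool := fun n => w.getD (n % w.length) false

/-- `s̃`: the word `s` with its last symbol inverted. -/
def flipLast (s : List Bool) : List Bool :=
  s.dropLast ++ [! s.getD (s.length - 1) false]

/-- `f(s) = s̃ s'` where `s'` is the bitwise complement of `s`. -/
def fW (s : List Bool) : List Bool := flipLast s ++ s.map (fun b => !b)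

/-- A finite word `s` is shift-bounded: `s' > σⁿ(s) > s` for `0 < n < |s|`,
comparisons via the embedding of finite words into infinite sequences
(`s` padded with zeros, `s'` is the complement of the padded sequence);
by convention `[false]` is excluded. -/
def ShiftBounded (s : List Bool) : Prop :=
  s ≠ [false] ∧ ∀ n, 0 < n → n < s.length →
    seqLt (wordSeq s) (wordSeq (s.drop n)) ∧
    seqLt (wordSeq (s.drop n)) (complSeq (wordSeq s))

/-- Prepend a finite word to an infinite sequence. -/
def appendSeq (w : List Bool) (t : ℕ → Bool) : ℕ → Bool :=
  fun n => if n < w.length then w.getD n false else t (n - w.length)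

/-- `w^k`: the word `w` repeated `k` times. -/
def repWord (k : ℕ) (w : List Bool) : List Bool :=
  (List.replicate k w).foldr (· ++ ·) []

/-- The infinite concatenation of the finite words `g 0, g 1, g 2, …`
(assuming all are nonempty, the `n`-th symbol is obtained from the first
`n+1` blocks). -/
def concatSeq (g : ℕ → List Bool) : ℕ → Bool :=
  fun n => (((List.range (n + 1)).map g).foldr (· ++ ·) []).getD n false

lemma wordSeq_ge (w : List Bool) (n : ℕ) (h : w.length ≤ n) : wordSeq w n = false :=
  List.getD_eq_default _ _ h

lemma wordSeq_drop (w : List Bool) (j k : ℕ) :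
    wordSeq (w.drop j) k = wordSeq w (j + k) := by
  simp [wordSeq, List.getD_eq_getElem?_getD, List.getElem?_drop]

lemma wordSeq_take_lt (w : List Bool) (m k : ℕ) (h : k < m) :
    wordSeq (w.take m) k = wordSeq w k := by
  simp [wordSeq, List.getD_eq_getElem?_getD, List.getElem?_take, h]

lemma wordSeq_mapnot_lt (w : List Bool) (k : ℕ) (h : k < w.length) :
    wordSeq (w.map (fun b => !b)) k = ! wordSeq w k := by
  simp [wordSeq, List.getD_eq_getElem?_getD, List.getElem?_map,
    List.getElem?_eq_getElem h]

lemma flipLast_length (w : List Bool) (h : w ≠ []) :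
    (flipLast w).length = w.length := by
  have : 0 < w.length := List.length_pos_iff.2 h
  simp [flipLast]
  omega

lemma wordSeq_flipLast_lt (w : List Bool) (k : ℕ) (h : k + 1 < w.length) :
    wordSeq (flipLast w) k = wordSeq w k := by
  have h1 : k < w.dropLast.length := by simp; omega
  show (flipLast w).getD k false = w.getD k false
  rw [flipLast, List.getD_append _ _ _ _ h1]
  simp [List.dropLast_eq_take, List.getD_eq_getElem?_getD, List.getElem?_take,
    show k < w.length - 1 by omega, List.getElem?_eq_getElem (show k < w.length by omega)]

lemma wordSeq_flipLast_last (w : List Bool) (h : w ≠ []) :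
    wordSeq (flipLast w) (w.length - 1) = ! wordSeq w (w.length - 1) := by
  have h0 : 0 < w.length := List.length_pos_iff.2 h
  have h1 : w.dropLast.length = w.length - 1 := by simp
  show (flipLast w).getD (w.length - 1) false = _
  rw [flipLast, ← h1]
  simp [List.getD_eq_getElem?_getD, List.getElem?_concat_length]
  simp [wordSeq, List.getD_eq_getElem?_getD]

lemma lastTrue (s : List Bool) (hs : ShiftBounded s) (hL : 1 < s.length) :
    wordSeq s (s.length - 1) = true := by
  obtain ⟨n, hn, ha, hb⟩ := (hs.2 (s.length - 1) (by omega) (by omega)).1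
  rw [wordSeq_drop] at hb
  by_cases h : n = 0
  · subst h; simpa using hb
  · exfalso
    rw [wordSeq_ge _ _ (by omega)] at hb
    exact Bool.false_ne_true hb

theorem stmt6 (s : List Bool) (hs : ShiftBounded s) (m : ℕ) (h0 : 0 < m)
    (hm : m < s.length) :
    seqLe (wordSeq (s.drop (s.length - m))) (wordSeq ((s.take m).map (fun b => !b))) ∧
    seqLt (wordSeq (s.take m)) (wordSeq (s.drop (s.length - m))) ∧
    seqLt (wordSeq (flipLast (s.drop (s.length - m))))
      (wordSeq ((s.take m).map (fun b => !b))) ∧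
    seqLe (wordSeq (s.take m)) (wordSeq (flipLast (s.drop (s.length - m)))) := by
  set L := s.length with hLdef
  have hL2 : 1 < L := by omega
  have hγlen : (s.drop (L - m)).length = m := by
    rw [List.length_drop]; omega
  have hγnil : s.drop (L - m) ≠ [] := by
    intro h; rw [h] at hγlen; simp at hγlen; omega
  have hαlen : (s.take m).length = m := by
    rw [List.length_take]; omega
  have hlast : wordSeq s (L - 1) = true := lastTrue s hs hL2
  have hγlast : wordSeq (s.drop (L - m)) (m - 1) = true := by
    rw [wordSeq_drop]
    rw [show L - m + (m - 1) = L - 1 by omega]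
    exact hlast
  have hmap : ∀ k < m, wordSeq ((s.take m).map (fun b => !b)) k
      = complSeq (wordSeq s) k := by
    intro k hk
    rw [wordSeq_mapnot_lt _ _ (by rw [hαlen]; exact hk), wordSeq_take_lt _ _ _ hk]
    rfl
  obtain ⟨hA, hB⟩ := hs.2 (L - m) (by omega) (by omega)
  have claims24 : seqLt (wordSeq (s.take m)) (wordSeq (s.drop (L - m))) ∧
      seqLe (wordSeq (s.take m)) (wordSeq (flipLast (s.drop (L - m)))) := by
    obtain ⟨n, hn, ha, hb⟩ := hA
    have hnm : n < m := by
      by_contra h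
      push_neg at h
      rw [wordSeq_ge _ _ (by rw [hγlen]; omega)] at hb
      exact Bool.false_ne_true hb
    constructor
    · refine ⟨n, fun k hk => ?_, ?_, hb⟩
      · rw [wordSeq_take_lt _ _ _ (by omega)]; exact hn k hk
      · rw [wordSeq_take_lt _ _ _ hnm]; exact ha
    · rcases lt_or_ge (n + 1) m with hc | hc
      · refine Or.inr ⟨n, fun k hk => ?_, ?_, ?_⟩
        · rw [wordSeq_take_lt _ _ _ (by omega),
            wordSeq_flipLast_lt _ _ (by rw [hγlen]; omega)]
          exact hn k hk
        · rw [wordSeq_take_lt _ _ _ hnm]; exact ha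
        · rw [wordSeq_flipLast_lt _ _ (by rw [hγlen]; omega)]; exact hb
      · have hn1 : n = m - 1 := by omega
        refine Or.inl (funext fun k => ?_)
        rcases lt_trichotomy k (m - 1) with hk | hk | hk
        · rw [wordSeq_take_lt _ _ _ (by omega),
            wordSeq_flipLast_lt _ _ (by rw [hγlen]; omega)]
          exact hn k (by omega)
        · have hfl := wordSeq_flipLast_last _ hγnil
          rw [hγlen] at hfl
          rw [hk, wordSeq_take_lt _ _ _ (by omega), hfl, ← hn1, hb, ha]
          rfl
        · rw [wordSeq_ge _ _ (by rw [hαlen]; omega),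
            wordSeq_ge _ _ (by rw [flipLast_length _ hγnil, hγlen]; omega)]
  have claims13 : seqLe (wordSeq (s.drop (L - m)))
        (wordSeq ((s.take m).map (fun b => !b))) ∧
      seqLt (wordSeq (flipLast (s.drop (L - m))))
        (wordSeq ((s.take m).map (fun b => !b))) := by
    obtain ⟨n, hn, ha, hb⟩ := hB
    rcases lt_trichotomy (n + 1) m with hc | hc | hc
    · constructor
      · exact Or.inr ⟨n, fun k hk => (hn k hk).trans (hmap k (by omega)).symm,
          ha, (hmap n (by omega)).trans hb⟩
      · refine ⟨n, fun k hk => ?_, ?_, (hmap n (by omega)).trans hb⟩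
        · rw [wordSeq_flipLast_lt _ _ (by rw [hγlen]; omega)]
          exact (hn k hk).trans (hmap k (by omega)).symm
        · rw [wordSeq_flipLast_lt _ _ (by rw [hγlen]; omega)]; exact ha
    · exfalso
      have hn1 : n = m - 1 := by omega
      rw [hn1, hγlast] at ha
      simp at ha
    · have heq : ∀ k < m, wordSeq (s.drop (L - m)) k = complSeq (wordSeq s) k :=
        fun k hk => hn k (by omega)
      have hsm : wordSeq s (m - 1) = false := by
        have h2 := heq (m - 1) (by omega)
        rw [hγlast] at h2
        simp only [complSeq] at h2
        cases h3 : wordSeq s (m - 1)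
        · rfl
        · rw [h3] at h2; simp at h2
      constructor
      · refine Or.inl (funext fun k => ?_)
        rcases lt_or_ge k m with hk | hk
        · exact (heq k hk).trans (hmap k hk).symm
        · rw [wordSeq_ge _ _ (by rw [hγlen]; omega),
            wordSeq_ge _ _ (by rw [List.length_map, hαlen]; omega)]
      · refine ⟨m - 1, fun k hk => ?_, ?_, ?_⟩
        · rw [wordSeq_flipLast_lt _ _ (by rw [hγlen]; omega)]
          exact (heq k (by omega)).trans (hmap k (by omega)).symm
        · have hfl := wordSeq_flipLast_last _ hγnil
          rw [hγlen] at hfl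
          rw [hfl, hγlast]
          rfl
        · rw [hmap (m - 1) (by omega)]
          simp [complSeq, hsm]
  exact ⟨claims13.1, claims24.1, claims13.2, claims24.2⟩
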